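/- Two permutation matrices x, y (vertices of the Birkhoff polytope B_p) corresponding to permutations σ, τ are adjacent vertices of B_p if and only if σ τ⁻¹ has exactly one cycle of length at least 2. -/

import Mathlib

open Finset

/-- The `p`-th Birkhoff polytope: the set of `p × p` doubly stochastic matrices. -/
def birkhoffPolytope (p : ℕ) : Set (Matrix (Fin p) (Fin p) ℝ) :=
  {x | (∀ i j, 0 ≤ x i j) ∧ (∀ i, ∑ j, x i j = 1) ∧ (∀ j, ∑ i, x i j = 1)}

/-- The permutation matrix of a permutation `σ`. -/
def permMatrix {p : ℕ} (σ : Equiv.Perm (Fin p)) : Matrix (Fin p) (Fin p) ℝ :=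
  fun i j => if σ j = i then 1 else 0

lemma permMatrix_rowsum {p : ℕ} (σ : Equiv.Perm (Fin p)) (i : Fin p) :
    ∑ j, permMatrix σ i j = 1 := by
  simp [permMatrix, Equiv.apply_eq_iff_eq_symm_apply]

lemma permMatrix_colsum {p : ℕ} (σ : Equiv.Perm (Fin p)) (j : Fin p) :
    ∑ i, permMatrix σ i j = 1 := by
  simp [permMatrix]

lemma permMatrix_mem {p : ℕ} (σ : Equiv.Perm (Fin p)) :
    permMatrix σ ∈ birkhoffPolytope p := by
  refine ⟨fun i j => ?_, permMatrix_rowsum σ, permMatrix_colsum σ⟩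
  unfold permMatrix; split_ifs <;> norm_num

lemma permMatrix_inj {p : ℕ} {σ τ : Equiv.Perm (Fin p)}
    (h : permMatrix σ = permMatrix τ) : σ = τ := by
  ext j
  have h2 := congrFun (congrFun h (σ j)) j
  simp only [permMatrix] at h2
  rw [if_pos trivial] at h2
  by_cases hh : τ j = σ j
  · exact congrArg Fin.val hh.symm
  · rw [if_neg hh] at h2
    norm_num at h2

lemma eq_of_permMatrix_mem_segment {p : ℕ} {σ τ ρ : Equiv.Perm (Fin p)}
    (h : permMatrix ρ ∈ segment ℝ (permMatrix σ) (permMatrix τ)) : ρ = σ ∨ ρ = τ := by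
  obtain ⟨a, b, ha, hb, hab, heq⟩ := h
  by_cases hστ : σ = τ
  · subst hστ
    rw [← add_smul, hab, one_smul] at heq
    exact Or.inl (permMatrix_inj heq.symm)
  · have hj : ∃ j, σ j ≠ τ j := by
      by_contra hcon
      push_neg at hcon
      exact hστ (Equiv.ext hcon)
    obtain ⟨j, hj⟩ := hj
    have h2 := congrFun (congrFun heq (σ j)) j
    simp only [Matrix.add_apply, Matrix.smul_apply, permMatrix, smul_eq_mul] at h2
    rw [if_pos trivial, if_neg (fun h : τ j = σ j => hj h.symm)] at h2
    by_cases hρ : ρ j = σ j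
    · rw [if_pos hρ] at h2
      rw [mul_one, mul_zero] at h2
      have hb0 : b = 0 := by linarith
      have ha1 : a = 1 := by linarith
      rw [ha1, hb0, one_smul, zero_smul, add_zero] at heq
      exact Or.inl (permMatrix_inj heq.symm)
    · rw [if_neg hρ] at h2
      rw [mul_one, mul_zero] at h2
      have ha0 : a = 0 := by linarith
      have hb1 : b = 1 := by linarith
      rw [ha0, hb1, one_smul, zero_smul, zero_add] at heq
      exact Or.inr (permMatrix_inj heq.symm)

/-- Key lemma: any doubly stochastic matrix supported on the union of the supports of the
two permutation matrices lies on the segment, provided `σ * τ⁻¹` is a cycle. -/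
lemma mem_segment_of_support {p : ℕ} {σ τ : Equiv.Perm (Fin p)}
    (hcyc : (σ * τ⁻¹).IsCycle) {x : Matrix (Fin p) (Fin p) ℝ}
    (hx : x ∈ birkhoffPolytope p)
    (hsupp : ∀ i j, σ j ≠ i → τ j ≠ i → x i j = 0) :
    x ∈ segment ℝ (permMatrix σ) (permMatrix τ) := by
  obtain ⟨hpos, hrow, hcol⟩ := hx
  set ρ : Equiv.Perm (Fin p) := τ⁻¹ * σ with hρdef
  have hρcyc : ρ.IsCycle := by
    have : ρ = τ⁻¹ * (σ * τ⁻¹) * (τ⁻¹)⁻¹ := by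
      rw [hρdef]; simp [mul_assoc]
    rw [this]
    exact hcyc.conj
  have hρ_apply : ∀ j, ρ j = τ⁻¹ (σ j) := fun j => rfl
  have hρmem : ∀ j, σ j ≠ τ j ↔ ρ j ≠ j := by
    intro j
    have h0 : ρ j = j ↔ σ j = τ j := by
      rw [hρ_apply]
      exact Equiv.Perm.inv_eq_iff_eq
    exact (not_congr h0).symm
  -- column identities
  have hcolfix : ∀ j, σ j = τ j → x (σ j) j = 1 := by
    intro j hfix
    have h1 := hcol j
    rw [Finset.sum_eq_single (σ j)] at h1
    · exact h1
    · intro i _ hi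
      exact hsupp i j (fun h => hi h.symm) (fun h => hi (hfix.trans h).symm)
    · simp
  have hcolmv : ∀ j, σ j ≠ τ j → x (σ j) j + x (τ j) j = 1 := by
    intro j hne
    have h1 : x (σ j) j + x (τ j) j = ∑ i ∈ ({σ j, τ j} : Finset (Fin p)), x i j :=
      (Finset.sum_pair (f := fun i => x i j) hne).symm
    rw [h1, Finset.sum_subset (Finset.subset_univ _)]
    · exact hcol j
    · intro i _ hi
      simp only [Finset.mem_insert, Finset.mem_singleton, not_or] at hi
      exact hsupp i j (fun h => hi.1 h.symm) (fun h => hi.2 h.symm)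
  -- row identity
  have hrowmv : ∀ j, σ j ≠ τ j → x (σ j) j + x (σ j) (ρ j) = 1 := by
    intro j hne
    have hρj : ρ j ≠ j := (hρmem j).mp hne
    have hτρ : τ (ρ j) = σ j := by rw [hρ_apply]; simp
    have h1 : x (σ j) j + x (σ j) (ρ j) = ∑ j' ∈ ({j, ρ j} : Finset (Fin p)), x (σ j) j' :=
      (Finset.sum_pair (f := fun j' => x (σ j) j') (Ne.symm hρj)).symm
    rw [h1, Finset.sum_subset (Finset.subset_univ _)]
    · exact hrow (σ j)
    · intro j' _ hj'
      simp only [Finset.mem_insert, Finset.mem_singleton, not_or] at hj'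
      refine hsupp (σ j) j' (fun h => hj'.1 (σ.injective h)) (fun h => hj'.2 ?_)
      rw [hρ_apply, ← h]
      simp
  -- step: the `a` value is invariant along the cycle
  have hstep : ∀ j, σ j ≠ τ j → x (σ (ρ j)) (ρ j) = x (σ j) j := by
    intro j hne
    have hρj : ρ j ≠ j := (hρmem j).mp hne
    have hρρj : ρ (ρ j) ≠ ρ j := by
      have := Equiv.Perm.apply_mem_support.mpr (Equiv.Perm.mem_support.mpr hρj)
      exact Equiv.Perm.mem_support.mp this
    have hne' : σ (ρ j) ≠ τ (ρ j) := (hρmem (ρ j)).mpr hρρj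
    have hτρ : τ (ρ j) = σ j := by rw [hρ_apply]; simp
    have h1 := hcolmv (ρ j) hne'
    have h2 := hrowmv j hne
    rw [hτρ] at h1
    linarith
  -- the value is constant along powers
  have hpow : ∀ (n : ℕ) (j : Fin p), σ j ≠ τ j →
      x (σ ((ρ ^ n) j)) ((ρ ^ n) j) = x (σ j) j := by
    intro n
    induction n with
    | zero => intro j _; simp
    | succ n ih =>
      intro j hj
      have h1 : (ρ ^ (n + 1)) j = ρ ((ρ ^ n) j) := by
        rw [pow_succ']; rfl
      have hmem : σ ((ρ ^ n) j) ≠ τ ((ρ ^ n) j) := by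
        rw [hρmem, ← Equiv.Perm.mem_support, Equiv.Perm.pow_apply_mem_support,
          Equiv.Perm.mem_support]
        exact (hρmem j).mp hj
      rw [h1, hstep _ hmem, ih j hj]
  -- pick a base point
  obtain ⟨j₀, hj₀, -⟩ := id hρcyc
  have hj₀' : σ j₀ ≠ τ j₀ := (hρmem j₀).mpr hj₀
  set a : ℝ := x (σ j₀) j₀ with ha_def
  have hconst : ∀ j, σ j ≠ τ j → x (σ j) j = a := by
    intro j hj
    obtain ⟨n, hn⟩ := hρcyc.exists_pow_eq hj₀ ((hρmem j).mp hj)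
    rw [← hn]
    exact hpow n j₀ hj₀'
  have ha0 : 0 ≤ a := hpos _ _
  have ha1 : a ≤ 1 := by
    have h1 := hcolmv j₀ hj₀'
    have h2 := hpos (τ j₀) j₀
    linarith
  refine ⟨a, 1 - a, ha0, by linarith, by ring, ?_⟩
  funext i j
  simp only [Matrix.add_apply, Matrix.smul_apply, permMatrix, smul_eq_mul]
  by_cases hfix : σ j = τ j
  · by_cases hi : σ j = i
    · rw [if_pos hi, if_pos (hfix ▸ hi), ← hi, hcolfix j hfix]
      ring
    · rw [if_neg hi, if_neg (fun h => hi (hfix.trans h)),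
        hsupp i j hi (fun h => hi (hfix.trans h))]
      ring
  · by_cases hi : σ j = i
    · rw [if_pos hi, if_neg (fun h => hfix (hi.trans h.symm)), ← hi, hconst j hfix]
      ring
    · by_cases hi' : τ j = i
      · rw [if_neg hi, if_pos hi', ← hi']
        have h1 := hcolmv j hfix
        have h2 := hconst j hfix
        have : x (τ j) j = 1 - a := by linarith
        rw [this]; ring
      · rw [if_neg hi, if_neg hi', hsupp i j hi hi']
        ring

/-- Two permutation matrices are adjacent vertices of the Birkhoff polytope (i.e. the
segment joining them is an edge of `B_p` and they are distinct) iff `σ τ⁻¹` has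
exactly one cycle of length at least two, i.e. `σ τ⁻¹` is a cycle. -/
theorem birkhoffPolytope_adjacency (p : ℕ) (σ τ : Equiv.Perm (Fin p)) :
    (permMatrix σ ≠ permMatrix τ ∧
        IsExtreme ℝ (birkhoffPolytope p) (segment ℝ (permMatrix σ) (permMatrix τ))) ↔
      (σ * τ⁻¹).IsCycle := by
  constructor
  · rintro ⟨hne, hsub, hext⟩
    set π : Equiv.Perm (Fin p) := σ * τ⁻¹ with hπdef
    have hπ1 : π ≠ 1 := by
      intro h
      exact hne (congrArg permMatrix (by rwa [hπdef, mul_inv_eq_one] at h))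
    by_contra hnc
    obtain ⟨c, hc⟩ := Finset.nonempty_iff_ne_empty.mpr
      (fun h => hπ1 (Equiv.Perm.cycleFactorsFinset_eq_empty_iff.mp h))
    have hccyc : c.IsCycle := (Equiv.Perm.mem_cycleFactorsFinset_iff.mp hc).1
    have hdisj : Equiv.Perm.Disjoint (π * c⁻¹) c :=
      Equiv.Perm.disjoint_mul_inv_of_mem_cycleFactorsFinset hc
    set d : Equiv.Perm (Fin p) := π * c⁻¹ with hd_def
    have hdc : d * c = π := by rw [hd_def]; group
    have hd1 : d ≠ 1 := by
      intro h
      rw [h, one_mul] at hdc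
      exact hnc (hdc ▸ hccyc)
    have hσπτ : ∀ j, σ j = π (τ j) := by
      intro j
      rw [hπdef]
      simp
    -- midpoint identity
    have hmid : (2:ℝ)⁻¹ • permMatrix σ + (2:ℝ)⁻¹ • permMatrix τ =
        (2:ℝ)⁻¹ • permMatrix (c * τ) + (2:ℝ)⁻¹ • permMatrix (d * τ) := by
      funext i j
      simp only [Matrix.add_apply, Matrix.smul_apply, permMatrix, Equiv.Perm.mul_apply,
        smul_eq_mul]
      rw [show σ j = π (τ j) from hσπτ j,
        show π (τ j) = d (c (τ j)) from by rw [← hdc]; rfl]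
      rcases hdisj (τ j) with hfix | hfix
      · -- d fixes τ j
        rcases hdisj (c (τ j)) with hfix2 | hfix2
        · simp only [hfix2, hfix]
          by_cases h : c (τ j) = i <;> by_cases h' : τ j = i <;> simp [h, h']
        · have h3 : c (τ j) = τ j := c.injective hfix2
          simp only [h3, hfix]
      · -- c fixes τ j
        simp only [hfix]
        by_cases h : d (τ j) = i <;> by_cases h' : τ j = i <;> simp [h, h', add_comm]
    have hmem1 : permMatrix (c * τ) ∈ birkhoffPolytope p := permMatrix_mem _
    have hmem2 : permMatrix (d * τ) ∈ birkhoffPolytope p := permMatrix_mem _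
    have hmidseg : (2:ℝ)⁻¹ • permMatrix σ + (2:ℝ)⁻¹ • permMatrix τ ∈
        segment ℝ (permMatrix σ) (permMatrix τ) :=
      ⟨2⁻¹, 2⁻¹, by norm_num, by norm_num, by norm_num, rfl⟩
    have hmidopen : (2:ℝ)⁻¹ • permMatrix σ + (2:ℝ)⁻¹ • permMatrix τ ∈
        openSegment ℝ (permMatrix (c * τ)) (permMatrix (d * τ)) :=
      ⟨2⁻¹, 2⁻¹, by norm_num, by norm_num, by norm_num, hmid.symm⟩
    have h1 := hext hmem1 hmem2 hmidseg hmidopen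
    have h2 := hext hmem2 hmem1 hmidseg (by rw [openSegment_symm]; exact hmidopen)
    have hcval : c = π := by
      rcases eq_of_permMatrix_mem_segment h1 with h | h
      · rw [hπdef]
        have : c = σ * τ⁻¹ := by
          rw [← h]; group
        rw [this]
      · exact absurd (mul_right_cancel (h.trans (one_mul τ).symm)) hccyc.ne_one
    have hdval : d = π := by
      rcases eq_of_permMatrix_mem_segment h2 with h | h
      · rw [hπdef]
        have : d = σ * τ⁻¹ := by rw [← h]; group
        rw [this]
      · exact absurd (mul_right_cancel (h.trans (one_mul τ).symm)) hd1
    rw [hcval, hdval] at hdc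
    exact hπ1 (by
      have := hdc
      nth_rewrite 3 [← one_mul π] at this
      exact mul_right_cancel this)
  · intro hcyc
    refine ⟨?_, ?_, ?_⟩
    · intro h
      exact hcyc.ne_one (by rw [permMatrix_inj h, mul_inv_cancel])
    · -- segment ⊆ birkhoffPolytope
      rintro z ⟨a, b, ha, hb, hab, rfl⟩
      refine ⟨fun i j => ?_, fun i => ?_, fun j => ?_⟩
      · simp only [Matrix.add_apply, Matrix.smul_apply, smul_eq_mul]
        have h1 := (permMatrix_mem σ).1 i j
        have h2 := (permMatrix_mem τ).1 i j
        positivity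
      · simp only [Matrix.add_apply, Matrix.smul_apply, smul_eq_mul,
          Finset.sum_add_distrib, ← Finset.mul_sum, permMatrix_rowsum]
        linarith
      · simp only [Matrix.add_apply, Matrix.smul_apply, smul_eq_mul,
          Finset.sum_add_distrib, ← Finset.mul_sum, permMatrix_colsum]
        linarith
    · intro x1 hx1 x2 hx2 z hz hzopen
      obtain ⟨b, b', hb, hb', hbb, hzeq⟩ := hzopen
      have hzsupp : ∀ i j, σ j ≠ i → τ j ≠ i → z i j = 0 := by
        obtain ⟨a, a', _, _, _, rfl⟩ := hz
        intro i j h1 h2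
        simp only [Matrix.add_apply, Matrix.smul_apply, permMatrix, smul_eq_mul,
          if_neg h1, if_neg h2]
        ring
      have hx1supp : ∀ i j, σ j ≠ i → τ j ≠ i → x1 i j = 0 := by
        intro i j h1 h2
        have he := congrFun (congrFun hzeq i) j
        simp only [Matrix.add_apply, Matrix.smul_apply, smul_eq_mul] at he
        rw [hzsupp i j h1 h2] at he
        have p1 : 0 ≤ b * x1 i j := mul_nonneg hb.le (hx1.1 i j)
        have p2 : 0 ≤ b' * x2 i j := mul_nonneg hb'.le (hx2.1 i j)
        have : b * x1 i j = 0 := by linarith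
        exact (mul_eq_zero.mp this).resolve_left (ne_of_gt hb)
      have hx2supp : ∀ i j, σ j ≠ i → τ j ≠ i → x2 i j = 0 := by
        intro i j h1 h2
        have he := congrFun (congrFun hzeq i) j
        simp only [Matrix.add_apply, Matrix.smul_apply, smul_eq_mul] at he
        rw [hzsupp i j h1 h2] at he
        have p1 : 0 ≤ b * x1 i j := mul_nonneg hb.le (hx1.1 i j)
        have p2 : 0 ≤ b' * x2 i j := mul_nonneg hb'.le (hx2.1 i j)
        have : b' * x2 i j = 0 := by linarith
        exact (mul_eq_zero.mp this).resolve_left (ne_of_gt hb')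
      exact mem_segment_of_support hcyc hx1 hx1supp
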